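/- Let m ≥ 2 be a natural number. If a formal power series F over ℚ satisfies F = 1 + X·F^m, then for every natural number n the n-th coefficient of F equals binom(mn, n)/((m−1)n + 1), the n-th Fuss–Catalan number. (Liouville's solution of Grunert's equation via Lagrange inversion, 1843.) -/

import Mathlib

open Finset PowerSeries

def raney (m r n : ℕ) : ℚ :=
  if n = 0 then 1 else (r : ℚ) / (m * n + r) * ((m * n + r).choose n)

lemma raney_zero (m r : ℕ) : raney m r 0 = 1 := by simp [raney]

lemma raney_succ (m r n : ℕ) :
    raney m r (n + 1) = (r : ℚ) / (m * (n+1) + r) * ((m * (n+1) + r).choose (n+1)) := by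
  simp [raney]

lemma raney_zero_r (m n : ℕ) : raney m 0 (n + 1) = 0 := by simp [raney_succ]

lemma raney_pascal (m : ℕ) (hm : 1 ≤ m) (r n : ℕ) :
    raney m (r+1) (n+1) = raney m r (n+1) + raney m (m+r) n := by
  cases n with
  | zero =>
    simp only [raney_succ, raney_zero]
    have h1 : (m : ℚ) * 1 + r ≠ 0 := by positivity
    have h2 : (m : ℚ) * 1 + (r+1) ≠ 0 := by positivity
    rw [mul_one] at *
    have c1 : (m + r).choose 1 = m + r := Nat.choose_one_right _
    have c2 : (m + (r+1)).choose 1 = m + (r+1) := Nat.choose_one_right _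
    push_cast [c1, c2]
    field_simp
    simp only [zero_add, mul_one, Nat.choose_one_right]
    push_cast
    ring
  | succ n =>
    simp only [raney_succ]
    have hmN2 : m * (n + 1) + (m + r) = m * (n+2) + r := by ring
    have hmN3 : m * (n + 1 + 1) + (r + 1) = (m * (n+2) + r) + 1 := by ring
    have hmN : m * (n + 1 + 1) + r = m * (n+2) + r := by ring
    rw [hmN2, hmN3, hmN]
    set N := m * (n + 2) + r with hNdef
    have hle : n + 1 ≤ N := by
      have : n + 2 ≤ m * (n+2) := Nat.le_mul_of_pos_left _ hm
      omega
    have h1 : ((N+1).choose (n+2) : ℚ) = (N.choose (n+1) : ℚ) + (N.choose (n+2) : ℚ) := by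
      exact_mod_cast congrArg (Nat.cast : ℕ → ℚ) (Nat.choose_succ_succ N (n+1))
    have h2 : ((N.choose (n+2)) : ℚ) * ((n:ℚ)+2) = (N.choose (n+1) : ℚ) * ((N : ℚ) - ((n:ℚ)+1)) := by
      have hc : (N.choose (n+1+1) * (n+1+1) : ℕ) = N.choose (n+1) * (N - (n+1)) :=
        Nat.choose_succ_right_eq N (n+1)
      have := congrArg (Nat.cast : ℕ → ℚ) hc
      push_cast [Nat.cast_sub hle] at this
      linarith [this]
    have hNQ : (N : ℚ) = m * (n+2) + r := by push_cast [hNdef]; ring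
    have hN0 : (N : ℚ) ≠ 0 := by
      have : 0 < N := by omega
      exact_mod_cast this.ne'
    have hN1 : (N : ℚ) + 1 ≠ 0 := by positivity
    have hn2 : (n : ℚ) + 2 ≠ 0 := by positivity
    push_cast
    simp only [show n+1+1 = n+2 from rfl]
    have d1 : (m:ℚ) * ((n:ℚ)+1+1) + ((r:ℚ)+1) = (N:ℚ)+1 := by rw [hNQ]; ring
    have d2 : (m:ℚ) * ((n:ℚ)+1+1) + (r:ℚ) = (N:ℚ) := by rw [hNQ]; ring
    have d3 : (m:ℚ) * ((n:ℚ)+1) + ((m:ℚ)+(r:ℚ)) = (N:ℚ) := by rw [hNQ]; ring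
    rw [d1, d2, d3, h1]
    rw [hNQ] at h2 ⊢
    field_simp
    linear_combination (m:ℚ) * h2

lemma raney_conv (m : ℕ) (hm : 1 ≤ m) :
    ∀ n r s, ∑ k ∈ Finset.range (n+1), raney m r k * raney m s (n-k) = raney m (r+s) n := by
  intro n
  induction n using Nat.strong_induction_on with
  | _ n ih =>
    intro r
    induction r with
    | zero =>
      intro s
      rw [Finset.sum_eq_single 0]
      · simp [raney_zero, zero_add]
      · intro k hk hk0
        obtain ⟨k', rfl⟩ := Nat.exists_eq_succ_of_ne_zero hk0
        rw [raney_zero_r, zero_mul]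
      · intro h; exact absurd (Finset.mem_range.2 (Nat.succ_pos n)) h
    | succ r ihr =>
      intro s
      cases n with
      | zero => simp [raney_zero]
      | succ n =>
        rw [Finset.sum_range_succ']
        simp only [raney_zero, Nat.succ_sub_succ]
        have hpas : ∀ k, raney m (r+1) (k+1) = raney m r (k+1) + raney m (m+r) k :=
          fun k => raney_pascal m hm r k
        calc (∑ k ∈ Finset.range (n+1), raney m (r+1) (k+1) * raney m s (n-k))
              + 1 * raney m s (n+1-0)
            = (∑ k ∈ Finset.range (n+1), (raney m r (k+1) * raney m s (n-k)
                + raney m (m+r) k * raney m s (n-k))) + raney m s (n+1) := by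
              simp only [hpas, add_mul, Nat.sub_zero, one_mul]
          _ = ((∑ k ∈ Finset.range (n+1), raney m r (k+1) * raney m s (n+1-(k+1)))
                + raney m r 0 * raney m s (n+1-0))
              + ∑ k ∈ Finset.range (n+1), raney m (m+r) k * raney m s (n-k) := by
              rw [Finset.sum_add_distrib, raney_zero]
              simp only [Nat.succ_sub_succ, Nat.sub_zero, one_mul]
              ring
          _ = raney m (r+s) (n+1) + raney m (m+r+s) n := by
              have hsplit := Finset.sum_range_succ'
                (fun k => raney m r k * raney m s (n+1-k)) (n+1)
              rw [← hsplit, ih n (by omega) (m+r) s]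
              have := ihr s
              rw [this]
          _ = raney m (r+1+s) (n+1) := by
              have := raney_pascal m hm (r+s) n
              rw [show r+1+s = (r+s)+1 by ring, this, show m+(r+s) = m+r+s by ring]

lemma coeff_pow_raney (m : ℕ) (hm : 1 ≤ m) (F : PowerSeries ℚ) (n : ℕ)
    (hc : ∀ k ≤ n, PowerSeries.coeff k F = raney m 1 k) :
    ∀ j, ∀ k ≤ n, PowerSeries.coeff k (F ^ j) = raney m j k := by
  intro j
  induction j with
  | zero =>
    intro k hk
    cases k with
    | zero => simp [raney_zero]
    | succ k => simp [raney_zero_r, PowerSeries.coeff_one]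
  | succ j ihj =>
    intro k hk
    rw [pow_succ', PowerSeries.coeff_mul,
      Finset.Nat.sum_antidiagonal_eq_sum_range_succ_mk]
    have : ∀ i ∈ Finset.range (k+1),
        PowerSeries.coeff i F * PowerSeries.coeff (k-i) (F ^ j)
          = raney m 1 i * raney m j (k-i) := by
      intro i hi
      rw [Finset.mem_range] at hi
      rw [hc i (by omega), ihj (k-i) (by omega)]
    rw [Finset.sum_congr rfl this, raney_conv m hm k 1 j, Nat.add_comm]

lemma raney_shift (m : ℕ) (hm : 1 ≤ m) (n : ℕ) : raney m m n = raney m 1 (n+1) := by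
  cases n with
  | zero =>
    rw [raney_zero, raney_succ]
    have hc : (m * (0+1) + 1).choose 1 = m + 1 := by
      rw [Nat.choose_one_right]; omega
    rw [hc]
    have : (m:ℚ) * (0+1) + 1 ≠ 0 := by positivity
    field_simp
    push_cast
    ring
  | succ n =>
    rw [raney_succ, raney_succ]
    have e1 : m * (n+1) + m = m * (n+1+1) := by ring
    have e2 : m * (n+1+1) + 1 = m * (n+1+1) + 1 := rfl
    rw [e1]
    set K := m * (n+1+1) with hK
    -- (K+1) * C(K, n+1) = C(K+1, n+2) * (n+2)
    have hc : (K + 1) * K.choose (n+1) = (K+1).choose (n+1+1) * (n+1+1) :=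
      Nat.add_one_mul_choose_eq K (n+1)
    have hcQ : ((K:ℚ) + 1) * (K.choose (n+1) : ℚ) = ((K+1).choose (n+2) : ℚ) * ((n:ℚ)+2) := by
      exact_mod_cast congrArg (Nat.cast : ℕ → ℚ) hc
    have hKQ : ((m:ℚ) * ((n:ℚ)+1) + (m:ℚ)) = (K:ℚ) := by push_cast [hK]; ring
    have hKQ2 : ((m:ℚ) * ((n:ℚ)+1+1) + 1) = (K:ℚ) + 1 := by push_cast [hK]; ring
    have hK0 : (K:ℚ) ≠ 0 := by
      have : 0 < K := by positivity
      exact_mod_cast this.ne'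
    have hK1 : (K:ℚ) + 1 ≠ 0 := by positivity
    have hn2 : (n:ℚ) + 2 ≠ 0 := by positivity
    have hKm : (K:ℚ) = (m:ℚ) * ((n:ℚ)+2) := by push_cast [hK]; ring
    push_cast
    rw [show ((m:ℚ)*((n:ℚ)+1+1)+1) = (K:ℚ)+1 from hKQ2,
      show ((m:ℚ)*((n:ℚ)+1)+(m:ℚ)) = (K:ℚ) from hKQ]
    field_simp
    linear_combination ((m:ℚ)) * hcQ - (((K+1).choose (n+2) : ℚ)) * hKm

/-- Liouville's solution of Grunert's equation (1843): if `F ∈ ℚ⟦X⟧` satisfies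
`F = 1 + X·Fᵐ` with `m ≥ 2`, then the `n`-th coefficient of `F` is the Fuss–Catalan
number `binom(mn, n)/((m−1)n + 1)`. -/
theorem fussCatalan_coeff (m : ℕ) (hm : 2 ≤ m) (F : PowerSeries ℚ)
    (hF : F = 1 + PowerSeries.X * F ^ m) (n : ℕ) :
    PowerSeries.coeff n F = (Nat.choose (m * n) n : ℚ) / (((m - 1) * n + 1 : ℕ) : ℚ) := by
  have hm1 : 1 ≤ m := by omega
  have key : ∀ n, PowerSeries.coeff n F = raney m 1 n := by
    intro n
    induction n using Nat.strong_induction_on with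
    | _ n ih =>
      cases n with
      | zero =>
        rw [hF]
        simp [raney_zero]
      | succ n =>
        rw [hF, map_add, PowerSeries.coeff_one, PowerSeries.coeff_succ_X_mul]
        have := coeff_pow_raney m hm1 F n (fun k hk => ih k (by omega)) m n le_rfl
        rw [this]
        simp only [Nat.succ_ne_zero, if_false, zero_add]
        exact raney_shift m hm1 n
  rw [key n]
  -- raney m 1 n = C(mn,n)/((m-1)n+1)
  cases n with
  | zero => simp [raney_zero]
  | succ n =>
    rw [raney_succ]
    set M := m * (n+1) with hMdef
    have hM : n + 1 ≤ M := Nat.le_mul_of_pos_left _ (by omega)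
    have ht : (m-1)*(n+1)+1 = M - n := by
      rw [Nat.sub_mul, one_mul]
      have h1 : n + 1 ≤ m * (n+1) := hM
      omega
    rw [ht]
    have hc1 : (M+1).choose (n+1+1) * (n+1+1) = (M+1).choose (n+1) * (M+1 - (n+1)) :=
      Nat.choose_succ_right_eq (M+1) (n+1)
    have hc2 : (M+1) * M.choose (n+1) = (M+1).choose (n+1+1) * (n+1+1) :=
      Nat.add_one_mul_choose_eq M (n+1)
    have hkey : (M+1).choose (n+1) * (M - n) = (M+1) * M.choose (n+1) := by
      have : M + 1 - (n+1) = M - n := by omega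
      rw [this] at hc1
      omega
    have hkeyQ : ((M+1).choose (n+1) : ℚ) * ((M:ℚ) - (n:ℚ)) = ((M:ℚ)+1) * (M.choose (n+1) : ℚ) := by
      have := congrArg (Nat.cast : ℕ → ℚ) hkey
      push_cast [Nat.cast_sub (by omega : n ≤ M)] at this
      linarith [this]
    have hMQ : ((m:ℚ) * ((n:ℚ)+1) + 1) = (M:ℚ) + 1 := by push_cast [hMdef]; ring
    have hM1 : (M:ℚ) + 1 ≠ 0 := by positivity
    have hMn : (M:ℚ) - (n:ℚ) ≠ 0 := by
      have : (n:ℚ) < (M:ℚ) := by exact_mod_cast (by omega : n < M)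
      linarith
    have hsub : ((M - n : ℕ) : ℚ) = (M:ℚ) - (n:ℚ) := by
      push_cast [Nat.cast_sub (by omega : n ≤ M)]; ring
    push_cast [hsub]
    rw [show ((m:ℚ)*((n:ℚ)+1)+1) = (M:ℚ)+1 from hMQ]
    have hMe : m * (n+1) + 1 = M + 1 := rfl
    rw [hMe]
    field_simp
    linear_combination hkeyQ
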